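/- arXiv:1611.09260 — 3 statements merged into one kernel-verified Lean document; each statement's English description precedes it below -/
import Mathlib

section
/- The boundary of the conic interval [l,u]_K equals (bd(l + K) ∩ (u − K)) ∪ ((l + K) ∩ bd(u − K)), where K is a proper convex cone and l <_K u. -/
/-- The boundary of the conic interval `[l,u]_K` equals
`(bd(l+K) ∩ (u−K)) ∪ ((l+K) ∩ bd(u−K))`, for `K` a proper convex cone and `l <_K u`. -/
theorem frontier_conic_interval (n : ℕ)
    (K : Set (EuclideanSpace ℝ (Fin n)))
    (hKclosed : IsClosed K) (hKconv : Convex ℝ K)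
    (hKcone : ∀ c : ℝ, 0 ≤ c → ∀ x ∈ K, c • x ∈ K)
    (hKpointed : K ∩ (-K) = {0})
    (hKint : (interior K).Nonempty)
    (l u : EuclideanSpace ℝ (Fin n)) (hlu : u - l ∈ K) (hne : l ≠ u) :
    frontier ({x | x - l ∈ K} ∩ {x | u - x ∈ K})
      = (frontier {x | x - l ∈ K} ∩ {x | u - x ∈ K})
        ∪ ({x | x - l ∈ K} ∩ frontier {x | u - x ∈ K}) := by
  have hA : IsClosed {x : EuclideanSpace ℝ (Fin n) | x - l ∈ K} :=
    hKclosed.preimage (continuous_id.sub continuous_const)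
  have hB : IsClosed {x : EuclideanSpace ℝ (Fin n) | u - x ∈ K} :=
    hKclosed.preimage (continuous_const.sub continuous_id)
  rw [(hA.inter hB).frontier_eq, hA.frontier_eq, hB.frontier_eq, interior_inter]
  ext x
  simp only [Set.mem_diff, Set.mem_inter_iff, Set.mem_union]
  tauto
end

section
/- Let K ⊆ ℝⁿ be a proper convex cone, l <_K u, and c ∈ ℝⁿ. Then max{⟨c,x⟩ : x ∈ [l,u]_K} is attained at a point of {l, u} ∪ (bd(l + K) ∩ bd(u − K)). -/
set_option maxHeartbeats 1000000


/-- For a proper convex cone `K`, `l <_K u` and `c ∈ ℝⁿ`, the maximum of `⟨c,·⟩` over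
`[l,u]_K` is attained at a point of `{l, u} ∪ (bd(l+K) ∩ bd(u−K))`. -/
theorem max_attained_on_extreme_set (n : ℕ)
    (K : Set (EuclideanSpace ℝ (Fin n)))
    (hKclosed : IsClosed K) (hKconv : Convex ℝ K)
    (hKcone : ∀ r : ℝ, 0 ≤ r → ∀ x ∈ K, r • x ∈ K)
    (hKpointed : K ∩ (-K) = {0})
    (hKint : (interior K).Nonempty)
    (l u : EuclideanSpace ℝ (Fin n)) (hlu : u - l ∈ K) (hne : l ≠ u)
    (c : EuclideanSpace ℝ (Fin n)) :
    ∃ x : EuclideanSpace ℝ (Fin n),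
      x ∈ ({l, u} : Set (EuclideanSpace ℝ (Fin n)))
          ∪ (frontier {y | y - l ∈ K} ∩ frontier {y | u - y ∈ K}) ∧
      x ∈ {y | y - l ∈ K} ∩ {y | u - y ∈ K} ∧
      ∀ y ∈ {y | y - l ∈ K} ∩ {y | u - y ∈ K}, (inner ℝ c y : ℝ) ≤ inner ℝ c x := by
  classical
  have hK0 : (0 : EuclideanSpace ℝ (Fin n)) ∈ K := by
    obtain ⟨x, hx⟩ := hKint
    have h := hKcone 0 le_rfl x (interior_subset hx)
    simpa using h
  set S : Set (EuclideanSpace ℝ (Fin n)) := {y | y - l ∈ K} ∩ {y | u - y ∈ K} with hSdef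
  have hlS : l ∈ S := ⟨by simp [hK0], by simpa using hlu⟩
  have huS : u ∈ S := ⟨by simpa using hlu, by simp [hK0]⟩
  have hcl1 : IsClosed {y : EuclideanSpace ℝ (Fin n) | y - l ∈ K} :=
    hKclosed.preimage (continuous_id.sub continuous_const)
  have hcl2 : IsClosed {y : EuclideanSpace ℝ (Fin n) | u - y ∈ K} :=
    hKclosed.preimage (continuous_const.sub continuous_id)
  have hSclosed : IsClosed S := hcl1.inter hcl2
  -- boundedness of S
  have hSbdd : Bornology.IsBounded S := by
    by_contra hb
    rw [isBounded_iff_forall_norm_le] at hb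
    push_neg at hb
    choose f hfS hfn using fun k : ℕ => hb ((k : ℝ) + ‖l‖ + 1)
    have hnorm : ∀ k : ℕ, (k : ℝ) + 1 ≤ ‖f k - l‖ := by
      intro k
      have h1 := norm_sub_norm_le (f k) l
      have h2 := hfn k
      linarith
    have hpos : ∀ k : ℕ, (0 : ℝ) < ‖f k - l‖ := by
      intro k
      have h := hnorm k
      have hk : (0:ℝ) ≤ (k:ℝ) := Nat.cast_nonneg k
      linarith
    set d : ℕ → EuclideanSpace ℝ (Fin n) := fun k => ‖f k - l‖⁻¹ • (f k - l) with hd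
    have hdK : ∀ k, d k ∈ K := fun k =>
      hKcone _ (inv_nonneg.2 (hpos k).le) _ (hfS k).1
    have hdS : ∀ k, d k ∈ Metric.sphere (0 : EuclideanSpace ℝ (Fin n)) 1 := by
      intro k
      simp only [mem_sphere_iff_norm, sub_zero, hd, norm_smul, norm_inv, norm_norm]
      exact inv_mul_cancel₀ (hpos k).ne'
    obtain ⟨v, hv, φ, hφ, hlim⟩ :=
      (isCompact_sphere (0 : EuclideanSpace ℝ (Fin n)) 1).tendsto_subseq hdS
    have hvK : v ∈ K :=
      hKclosed.mem_of_tendsto hlim (Filter.Eventually.of_forall fun k => hdK (φ k))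
    have heK : ∀ k, ‖f k - l‖⁻¹ • (u - f k) ∈ K := fun k =>
      hKcone _ (inv_nonneg.2 (hpos k).le) _ (hfS k).2
    have hmono : ∀ k : ℕ, (k : ℝ) + 1 ≤ ‖f (φ k) - l‖ := by
      intro k
      have h1 : k ≤ φ k := hφ.le_apply
      have h2 : ((k : ℝ)) ≤ ((φ k : ℝ)) := Nat.cast_le.2 h1
      have h3 := hnorm (φ k)
      linarith
    have hnormtend : Filter.Tendsto (fun k => ‖f (φ k) - l‖) Filter.atTop Filter.atTop :=
      Filter.tendsto_atTop_mono hmono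
        (Filter.tendsto_atTop_add_const_right _ 1 tendsto_natCast_atTop_atTop)
    have hinvtend : Filter.Tendsto (fun k => ‖f (φ k) - l‖⁻¹) Filter.atTop (nhds 0) :=
      hnormtend.inv_tendsto_atTop
    have hetend : Filter.Tendsto (fun k => ‖f (φ k) - l‖⁻¹ • (u - f (φ k)))
        Filter.atTop (nhds (-v)) := by
      have heq : ∀ k, ‖f (φ k) - l‖⁻¹ • (u - f (φ k))
          = ‖f (φ k) - l‖⁻¹ • (u - l) - d (φ k) := by
        intro k
        rw [hd]
        rw [← smul_sub]
        congr 1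
        abel
      simp only [heq]
      have h1 : Filter.Tendsto (fun k => ‖f (φ k) - l‖⁻¹ • (u - l))
          Filter.atTop (nhds ((0 : ℝ) • (u - l))) := hinvtend.smul_const _
      rw [zero_smul] at h1
      have := h1.sub hlim
      simpa using this
    have hnvK : -v ∈ K :=
      hKclosed.mem_of_tendsto hetend (Filter.Eventually.of_forall fun k => heK (φ k))
    have hv0 : v = 0 := by
      have : v ∈ K ∩ (-K) := ⟨hvK, by simpa using hnvK⟩
      rw [hKpointed] at this
      exact this
    rw [hv0] at hv
    simp at hv
  have hScompact : IsCompact S :=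
    Metric.isCompact_of_isClosed_isBounded hSclosed hSbdd
  -- maximizer
  have hcont : Continuous (fun y : EuclideanSpace ℝ (Fin n) => (inner ℝ c y : ℝ)) :=
    continuous_const.inner continuous_id
  obtain ⟨x, hxS, hxmax⟩ :=
    hScompact.exists_isMaxOn ⟨l, hlS⟩ hcont.continuousOn
  have hxmax' : ∀ y ∈ S, (inner ℝ c y : ℝ) ≤ inner ℝ c x := fun y hy => hxmax hy
  by_cases h2 : x ∈ interior {y : EuclideanSpace ℝ (Fin n) | u - y ∈ K}
  · -- optimum value attained at l
    have hkey : (inner ℝ c (x - l) : ℝ) ≤ 0 := by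
      by_cases hxl : x = l
      · simp [hxl]
      · have hxlpos : (0 : ℝ) < ‖x - l‖ := by
          rw [norm_pos_iff]; exact sub_ne_zero.2 hxl
        obtain ⟨ε, hε, hball⟩ := Metric.mem_nhds_iff.1 (mem_interior_iff_mem_nhds.1 h2)
        set s : ℝ := ε / (2 * ‖x - l‖) with hs
        have hspos : 0 < s := by positivity
        set z : EuclideanSpace ℝ (Fin n) := x + s • (x - l) with hz
        have hzball : z ∈ Metric.ball x ε := by
          rw [Metric.mem_ball, dist_eq_norm]
          have : z - x = s • (x - l) := by rw [hz]; abel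
          rw [this, norm_smul, Real.norm_eq_abs, abs_of_pos hspos, hs]
          have heq : ε / (2 * ‖x - l‖) * ‖x - l‖ = ε / 2 := by
            field_simp
          rw [heq]
          linarith
        have hz2 : z ∈ {y : EuclideanSpace ℝ (Fin n) | u - y ∈ K} := hball hzball
        have hz1 : z ∈ {y : EuclideanSpace ℝ (Fin n) | y - l ∈ K} := by
          have : z - l = (1 + s) • (x - l) := by
            rw [hz, add_smul, one_smul]; abel
          show z - l ∈ K
          rw [this]
          exact hKcone _ (by linarith) _ hxS.1
        have hzS : z ∈ S := ⟨hz1, hz2⟩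
        have := hxmax' z hzS
        have hinner : (inner ℝ c z : ℝ) = inner ℝ c x + s * inner ℝ c (x - l) := by
          rw [hz, inner_add_right, real_inner_smul_right]
        rw [hinner] at this
        nlinarith
    refine ⟨l, Or.inl (Or.inl rfl), hlS, fun y hy => ?_⟩
    have h1 := hxmax' y hy
    have h2' : (inner ℝ c x : ℝ) = inner ℝ c l + inner ℝ c (x - l) := by
      rw [← inner_add_right]
      congr 1
      abel
    linarith
  · have hfr2 : x ∈ frontier {y : EuclideanSpace ℝ (Fin n) | u - y ∈ K} := by
      rw [hcl2.frontier_eq]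
      exact ⟨hxS.2, h2⟩
    by_cases h1 : x ∈ interior {y : EuclideanSpace ℝ (Fin n) | y - l ∈ K}
    · -- optimum value attained at u
      have hkey : (0 : ℝ) ≤ inner ℝ c (u - x) := by
        by_cases hxu : x = u
        · simp [hxu]
        · have hxupos : (0 : ℝ) < ‖u - x‖ := by
            rw [norm_pos_iff]; exact sub_ne_zero.2 (fun h => hxu h.symm)
          obtain ⟨ε, hε, hball⟩ := Metric.mem_nhds_iff.1 (mem_interior_iff_mem_nhds.1 h1)
          set s : ℝ := ε / (2 * ‖u - x‖) with hs
          have hspos : 0 < s := by positivity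
          set z : EuclideanSpace ℝ (Fin n) := x - s • (u - x) with hz
          have hzball : z ∈ Metric.ball x ε := by
            rw [Metric.mem_ball, dist_eq_norm]
            have : z - x = -(s • (u - x)) := by rw [hz]; abel
            rw [this, norm_neg, norm_smul, Real.norm_eq_abs, abs_of_pos hspos, hs]
            have heq : ε / (2 * ‖u - x‖) * ‖u - x‖ = ε / 2 := by
              field_simp
            rw [heq]
            linarith
          have hz1 : z ∈ {y : EuclideanSpace ℝ (Fin n) | y - l ∈ K} := hball hzball
          have hz2 : z ∈ {y : EuclideanSpace ℝ (Fin n) | u - y ∈ K} := by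
            have : u - z = (1 + s) • (u - x) := by
              rw [hz, add_smul, one_smul]; abel
            show u - z ∈ K
            rw [this]
            exact hKcone _ (by linarith) _ hxS.2
          have hzS : z ∈ S := ⟨hz1, hz2⟩
          have := hxmax' z hzS
          have hinner : (inner ℝ c z : ℝ) = inner ℝ c x - s * inner ℝ c (u - x) := by
            rw [hz, inner_sub_right, real_inner_smul_right]
          rw [hinner] at this
          nlinarith
      refine ⟨u, Or.inl (Or.inr rfl), huS, fun y hy => ?_⟩
      have hy1 := hxmax' y hy
      have h2' : (inner ℝ c u : ℝ) = inner ℝ c x + inner ℝ c (u - x) := by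
        rw [← inner_add_right]
        congr 1
        abel
      linarith
    · have hfr1 : x ∈ frontier {y : EuclideanSpace ℝ (Fin n) | y - l ∈ K} := by
        rw [hcl1.frontier_eq]
        exact ⟨hxS.1, h1⟩
      exact ⟨x, Or.inr ⟨hfr1, hfr2⟩, hxS, hxmax'⟩
end

section
/- Let w = (w₀, w̃) be in the interior of the Lorentz cone L_n (i.e., ‖w̃‖₂ < w₀). Set w̄ = w̃/w₀, w̄₀ = (w₀² − ‖w̃‖²)/(2w₀), Q = I − w̄ w̄ᵀ, γ² = w₀ w̄₀/2. Then the set E(w) = {x = (x₀, x̃) : ‖x̃‖² = x₀², ‖w̃ − x̃‖² = (w₀ − x₀)²} equals {x : x₀ = ⟨x̃, w̄⟩ + w̄₀ and ‖Q^{1/2}(x̃ − w̃/2)‖² = γ²}. -/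
lemma ellipsoid_key (w0 s t u x0 : ℝ) (hw0 : w0 ≠ 0)
    (hx0 : x0 = w0⁻¹ * s + (w0^2 - t^2)/(2*w0)) :
    (u^2 - s + t^2/4 - (w0⁻¹*(s - t^2/2))^2 = w0*((w0^2-t^2)/(2*w0))/2 ↔ u^2 = x0^2) := by
  subst hx0
  constructor <;> intro h <;> field_simp at h ⊢
  · linear_combination h / 4
  · apply mul_left_cancel₀ hw0
    linear_combination (4 * w0) * h


/-- Ellipsoid representation of `E(w)` for `w` in the interior of the Lorentz cone:
with `w̄ = w̃/w₀`, `w̄₀ = (w₀² − ‖w̃‖²)/(2w₀)`, `Q = I − w̄w̄ᵀ`, `γ² = w₀w̄₀/2`,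
`E(w) = {x : ‖x̃‖² = x₀², ‖w̃ − x̃‖² = (w₀ − x₀)²}`
equals `{x : x₀ = ⟨x̃, w̄⟩ + w̄₀ ∧ ‖Q^{1/2}(x̃ − w̃/2)‖² = γ²}`
(where `‖Q^{1/2}v‖² = ⟨v, Qv⟩` with `Qv = v − ⟨w̄, v⟩w̄`). -/
theorem ellipsoid_representation (n : ℕ) (w0 : ℝ) (wt : EuclideanSpace ℝ (Fin n))
    (hw : ‖wt‖ < w0) :
    {x : ℝ × EuclideanSpace ℝ (Fin n) |
        ‖x.2‖ ^ 2 = x.1 ^ 2 ∧ ‖wt - x.2‖ ^ 2 = (w0 - x.1) ^ 2}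
      = {x : ℝ × EuclideanSpace ℝ (Fin n) |
          x.1 = (inner ℝ x.2 (w0⁻¹ • wt) : ℝ) + (w0 ^ 2 - ‖wt‖ ^ 2) / (2 * w0) ∧
          (inner ℝ (x.2 - (1 / 2 : ℝ) • wt)
              ((x.2 - (1 / 2 : ℝ) • wt)
                - (inner ℝ (w0⁻¹ • wt) (x.2 - (1 / 2 : ℝ) • wt) : ℝ) • (w0⁻¹ • wt)) : ℝ)
            = w0 * ((w0 ^ 2 - ‖wt‖ ^ 2) / (2 * w0)) / 2} := by
  have hw0 : (0:ℝ) < w0 := lt_of_le_of_lt (norm_nonneg wt) hw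
  have hw0' : w0 ≠ 0 := ne_of_gt hw0
  ext ⟨x0, xt⟩
  simp only [Set.mem_setOf_eq]
  have hsub : ‖wt - xt‖ ^ 2 = ‖wt‖ ^ 2 - 2 * (inner ℝ wt xt : ℝ) + ‖xt‖ ^ 2 :=
    norm_sub_sq_real wt xt
  have h1 : (inner ℝ xt (w0⁻¹ • wt) : ℝ) = w0⁻¹ * (inner ℝ wt xt : ℝ) := by
    rw [real_inner_smul_right, real_inner_comm]
  have h2 : (inner ℝ (w0⁻¹ • wt) (xt - (1/2:ℝ) • wt) : ℝ)
      = w0⁻¹ * ((inner ℝ wt xt : ℝ) - ‖wt‖^2/2) := by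
    rw [real_inner_smul_left, inner_sub_right, real_inner_smul_right,
      real_inner_self_eq_norm_sq]
    ring
  have hva : (inner ℝ (xt - (1/2:ℝ) • wt) (w0⁻¹ • wt) : ℝ)
      = w0⁻¹ * ((inner ℝ wt xt : ℝ) - ‖wt‖^2/2) := by
    rw [real_inner_comm]; exact h2
  have hvv : (inner ℝ (xt - (1/2:ℝ) • wt) (xt - (1/2:ℝ) • wt) : ℝ)
      = ‖xt‖^2 - (inner ℝ wt xt : ℝ) + ‖wt‖^2/4 := by
    rw [real_inner_self_eq_norm_sq, norm_sub_sq_real, real_inner_smul_right, norm_smul,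
      real_inner_comm xt wt]
    simp only [Real.norm_eq_abs]
    rw [abs_of_pos (by norm_num : (0:ℝ) < 1/2)]
    ring
  have h3 : (inner ℝ (xt - (1/2:ℝ) • wt)
      ((xt - (1/2:ℝ) • wt) - (inner ℝ (w0⁻¹ • wt) (xt - (1/2:ℝ) • wt) : ℝ) • (w0⁻¹ • wt)) : ℝ)
      = (‖xt‖^2 - (inner ℝ wt xt : ℝ) + ‖wt‖^2/4)
        - (w0⁻¹ * ((inner ℝ wt xt : ℝ) - ‖wt‖^2/2))^2 := by
    rw [inner_sub_right, real_inner_smul_right, h2, hva, hvv]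
    ring
  rw [hsub, h1, h3]
  set s : ℝ := (inner ℝ wt xt : ℝ)
  set t : ℝ := ‖wt‖
  set u : ℝ := ‖xt‖
  constructor
  · rintro ⟨hq, hl⟩
    have hlin : 2*w0*x0 = 2*s + w0^2 - t^2 := by nlinarith [hl, hq]
    have hx0 : x0 = w0⁻¹ * s + (w0^2 - t^2)/(2*w0) := by
      field_simp
      linear_combination hlin
    exact ⟨hx0, (ellipsoid_key w0 s t u x0 hw0' hx0).mpr hq⟩
  · rintro ⟨hl, hq⟩
    have hu2 : u^2 = x0^2 := (ellipsoid_key w0 s t u x0 hw0' hl).mp hq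
    have hlin : 2*w0*x0 = 2*s + w0^2 - t^2 := by
      rw [hl]; field_simp; ring
    exact ⟨hu2, by linear_combination hu2 + hlin⟩
end
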